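/- Let r, s, k be nonnegative integers with r ≥ 1 and k ≤ s. Then N(r,s;r,0,k,s−k) = N(r,s;r,s−k,k,0) and N(r,s;r,k,0,s−k) = N(r,s;r,s−k,0,k). -/
import Mathlib


open Finset

/-- The Mixed Generalized Gaussian Number `N(α,β;k₀,k₁,k₂,k₃)`. -/
def MGN (a b k₀ k₁ k₂ k₃ : ℕ) : ℚ :=
  ((∏ i ∈ range k₀, ((2 ^ a - 2 ^ i : ℚ) * 2 ^ b)) *
   (∏ i ∈ range k₁, ((8 ^ b - 4 ^ b * 2 ^ i : ℚ) * 2 ^ a)) *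
   (∏ i ∈ range k₂, ((4 ^ b - 2 ^ (b + k₁ + i) : ℚ) * 2 ^ a)) *
   (∏ i ∈ range k₃, (2 ^ b - 2 ^ (k₁ + k₂ + i) : ℚ))) /
  ((∏ i ∈ range k₀, (2 ^ (k₀ + k₁ + k₂ + k₃) - 2 ^ (k₁ + k₂ + k₃ + i) : ℚ)) *
   (∏ i ∈ range k₁, ((8 ^ k₁ - 4 ^ k₁ * 2 ^ i : ℚ) * 2 ^ (k₀ + 2 * k₂ + k₃))) *
   (∏ i ∈ range k₂, ((4 ^ k₂ - 2 ^ (k₂ + i) : ℚ) * 2 ^ (k₀ + 2 * k₁ + k₃))) *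
   (∏ i ∈ range k₃, (2 ^ (k₁ + k₂ + k₃) - 2 ^ (k₁ + k₂ + i) : ℚ)))

/-- Auxiliary product `∏_{i<n} (2^a - 2^i)` over ℚ. -/
def Fq (a n : ℕ) : ℚ := ∏ i ∈ range n, ((2:ℚ)^a - 2^i)

lemma Fq_ne_zero {a n : ℕ} (h : n ≤ a) : Fq a n ≠ 0 := by
  rw [Fq, Finset.prod_ne_zero_iff]
  intro i hi
  have hlt : (2:ℚ)^i < 2^a := by
    apply pow_lt_pow_right₀ (by norm_num)
    exact lt_of_lt_of_le (mem_range.mp hi) h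
  exact sub_ne_zero_of_ne hlt.ne'

lemma prod_cF (g : ℕ → ℚ) (c a n : ℕ) (h : ∀ i < n, g i = 2^c * (2^a - 2^i)) :
    ∏ i ∈ range n, g i = 2^(c*n) * Fq a n := by
  rw [Finset.prod_congr rfl fun i hi => h i (mem_range.mp hi), Finset.prod_mul_distrib,
    Finset.prod_const, card_range, ← pow_mul, Fq]

lemma prod_cF_div (g : ℕ → ℚ) (c a b n : ℕ) (h : ∀ i < n, g i = 2^c * (2^a - 2^(b+i)))
    (hb : Fq a b ≠ 0) :
    ∏ i ∈ range n, g i = 2^(c*n) * (Fq a (b+n) / Fq a b) := by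
  have key : Fq a (b+n) = Fq a b * ∏ i ∈ range n, ((2:ℚ)^a - 2^(b+i)) := by
    rw [Fq, Fq, Finset.prod_range_add]
  rw [Finset.prod_congr rfl fun i hi => h i (mem_range.mp hi), Finset.prod_mul_distrib,
    Finset.prod_const, card_range, ← pow_mul, key, mul_div_cancel_left₀ _ hb]

/-- `N(r,s;r,0,k,s-k) = N(r,s;r,s-k,k,0)` and `N(r,s;r,k,0,s-k) = N(r,s;r,s-k,0,k)`. -/
theorem MGN_swap_full_binary (r s k : ℕ) (hr : 1 ≤ r) (hk : k ≤ s) :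
    MGN r s r 0 k (s - k) = MGN r s r (s - k) k 0 ∧
    MGN r s r k 0 (s - k) = MGN r s r (s - k) 0 k := by
  obtain ⟨m, rfl⟩ : ∃ m, s = k + m := ⟨s - k, by omega⟩
  simp only [Nat.add_sub_cancel_left]
  have h4 : (4:ℚ) = 2^2 := by norm_num
  have h8 : (8:ℚ) = 2^3 := by norm_num
  have hFr : Fq r r ≠ 0 := Fq_ne_zero le_rfl
  have hFk : Fq k k ≠ 0 := Fq_ne_zero le_rfl
  have hFm : Fq m m ≠ 0 := Fq_ne_zero le_rfl
  have hFsk : Fq (k+m) k ≠ 0 := Fq_ne_zero (by omega)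
  have hFsm : Fq (k+m) m ≠ 0 := Fq_ne_zero (by omega)
  have h2 : (2:ℚ) ≠ 0 := by norm_num
  constructor
  · -- MGN r (k+m) r 0 k m = MGN r (k+m) r m k 0
    rw [MGN, MGN]
    rw [prod_cF _ (k+m) r r (fun i hi => by ring)]
    rw [prod_cF _ ((k+m)+r) (k+m) k (fun i hi => by simp only [h4, ← pow_mul]; ring)]
    rw [prod_cF_div _ 0 (k+m) k m (fun i hi => by ring) hFsk]
    rw [prod_cF _ (k+m) r r (fun i hi => by ring)]
    rw [prod_cF _ (k+(r+m)) k k (fun i hi => by simp only [h4, ← pow_mul]; ring)]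
    rw [prod_cF _ k m m (fun i hi => by ring)]
    rw [prod_cF _ (2*(k+m)+r) (k+m) m (fun i hi => by simp only [h8, h4, ← pow_mul]; ring)]
    rw [prod_cF_div _ ((k+m)+r) (k+m) m k (fun i hi => by simp only [h4, ← pow_mul]; ring) hFsm]
    rw [prod_cF _ (m+k) r r (fun i hi => by ring)]
    rw [prod_cF _ (2*m+(r+2*k)) m m (fun i hi => by simp only [h8, h4, ← pow_mul]; ring)]
    rw [prod_cF _ (k+(r+2*m)) k k (fun i hi => by simp only [h4, ← pow_mul]; ring)]
    rw [show m + k = k + m from Nat.add_comm m k]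
    simp only [prod_range_zero]
    field_simp
    ring
  · -- MGN r (k+m) r k 0 m = MGN r (k+m) r m 0 k
    rw [MGN, MGN]
    rw [prod_cF _ (k+m) r r (fun i hi => by ring)]
    rw [prod_cF _ (2*(k+m)+r) (k+m) k (fun i hi => by simp only [h8, h4, ← pow_mul]; ring)]
    rw [prod_cF_div _ 0 (k+m) k m (fun i hi => by ring) hFsk]
    rw [prod_cF _ (k+m) r r (fun i hi => by ring)]
    rw [prod_cF _ (2*k+(r+m)) k k (fun i hi => by simp only [h8, h4, ← pow_mul]; ring)]
    rw [prod_cF _ k m m (fun i hi => by ring)]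
    rw [prod_cF _ (2*(k+m)+r) (k+m) m (fun i hi => by simp only [h8, h4, ← pow_mul]; ring)]
    rw [prod_cF_div _ 0 (k+m) m k (fun i hi => by ring) hFsm]
    rw [prod_cF _ (m+k) r r (fun i hi => by ring)]
    rw [prod_cF _ (2*m+(r+k)) m m (fun i hi => by simp only [h8, h4, ← pow_mul]; ring)]
    rw [prod_cF _ m k k (fun i hi => by ring)]
    rw [show m + k = k + m from Nat.add_comm m k]
    simp only [prod_range_zero]
    field_simp
    ring
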